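/- Let (V,c,p) be an instance of Asymmetric A Priori TSP with p(V) := Σ_{v∈V} p(v) ≤ 1/2. Then every tour T on V satisfies E_{A∼p}[c(T[A])] ≤ 2 · E_{A∼p}[TSP(A,c)]. -/

import Mathlib

noncomputable section

/-- The cost of a tour given as a cyclic list: the sum of `c` over consecutive pairs
(cyclically). -/
def cycCost {V : Type*} (c : V → V → ℝ) (l : List V) : ℝ :=
  (List.zipWith c l (l.rotate 1)).sum

/-- `l` is a tour on the finite set `A`: a cyclic ordering of `A`, visiting each element
exactly once. -/
def IsTour {V : Type*} [DecidableEq V] (A : Finset V) (l : List V) : Prop :=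
  l.Nodup ∧ l.toFinset = A

/-- Short-cutting a tour to the set `A` of active vertices. -/
def shortcut {V : Type*} [DecidableEq V] (l : List V) (A : Finset V) : List V :=
  l.filter (fun v => v ∈ A)

/-- The expectation of `f` over the random set of active vertices, where each vertex `v`
is active independently with probability `p v`. -/
def apExpect {V : Type*} [Fintype V] [DecidableEq V] (p : V → ℝ) (f : Finset V → ℝ) : ℝ :=
  ∑ A : Finset V, (∏ v ∈ A, p v) * (∏ v ∈ Aᶜ, (1 - p v)) * f A

/-- The minimum cost of a tour on `A` with respect to `c`. -/
def TSP {V : Type*} [DecidableEq V] (c : V → V → ℝ) (A : Finset V) : ℝ :=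
  sInf {x : ℝ | ∃ l : List V, IsTour A l ∧ x = cycCost c l}

section MyAux

variable {V : Type*}

lemma my_zipWith_sum_nonneg (c : V → V → ℝ) (hc0 : ∀ x y, 0 ≤ c x y) :
    ∀ (l₁ l₂ : List V), 0 ≤ (List.zipWith c l₁ l₂).sum
  | [], _ => by simp
  | _ :: _, [] => by simp
  | a :: l₁, b :: l₂ => by
      simp only [List.zipWith, List.sum_cons]
      exact add_nonneg (hc0 a b) (my_zipWith_sum_nonneg c hc0 l₁ l₂)

lemma my_cycCost_nonneg (c : V → V → ℝ) (hc0 : ∀ x y, 0 ≤ c x y) (l : List V) :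
    0 ≤ cycCost c l := my_zipWith_sum_nonneg c hc0 _ _

lemma my_TSP_nonneg [DecidableEq V] (c : V → V → ℝ) (hc0 : ∀ x y, 0 ≤ c x y) (A : Finset V) :
    0 ≤ TSP c A := by
  apply Real.sInf_nonneg
  rintro x ⟨l, -, rfl⟩
  exact my_cycCost_nonneg c hc0 l

lemma my_one_sub_sum_le_prod [DecidableEq V] (p : V → ℝ) (hp0 : ∀ v, 0 ≤ p v)
    (hp1 : ∀ v, p v ≤ 1) (s : Finset V) :
    1 - ∑ v ∈ s, p v ≤ ∏ v ∈ s, (1 - p v) := by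
  induction s using Finset.induction with
  | empty => simp
  | @insert a s ha ih =>
    rw [Finset.sum_insert ha, Finset.prod_insert ha]
    have h1 : 0 ≤ ∏ v ∈ s, (1 - p v) := Finset.prod_nonneg fun v _ => by linarith [hp1 v]
    have h2 : 0 ≤ ∑ v ∈ s, p v := Finset.sum_nonneg fun v _ => hp0 v
    nlinarith [hp0 a, hp1 a]

lemma my_tour_pair [DecidableEq V] {u v : V} (huv : u ≠ v) {l : List V}
    (h : IsTour {u, v} l) : l = [u, v] ∨ l = [v, u] := by
  obtain ⟨hnd, hA⟩ := h
  have hlen : l.length = 2 := by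
    rw [← List.toFinset_card_of_nodup hnd, hA, Finset.card_pair huv]
  obtain ⟨a, b, rfl⟩ := List.length_eq_two.mp hlen
  have hab : a ≠ b := by simpa using hnd
  simp only [List.toFinset_cons, List.toFinset_nil, insert_empty_eq] at hA
  have ha : a = u ∨ a = v := by
    have : a ∈ ({u, v} : Finset V) := hA ▸ (by simp)
    simpa using this
  have hb : b = u ∨ b = v := by
    have : b ∈ ({u, v} : Finset V) := hA ▸ (by simp)
    simpa using this
  have hu : u ∈ ({a, b} : Finset V) := by rw [hA]; simp
  have hv : v ∈ ({a, b} : Finset V) := by rw [hA]; simp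
  simp only [Finset.mem_insert, Finset.mem_singleton] at hu hv
  rcases ha with rfl | rfl <;> rcases hb with rfl | rfl <;> tauto

lemma my_TSP_pair [DecidableEq V] (c : V → V → ℝ) {u v : V} (huv : u ≠ v) :
    c u v + c v u ≤ TSP c {u, v} := by
  apply le_csInf
  · refine ⟨cycCost c [u, v], [u, v], ⟨by simp [huv], ?_⟩, rfl⟩
    simp
  · rintro x ⟨l, hl, rfl⟩
    rcases my_tour_pair huv hl with rfl | rfl
    · simp [cycCost, List.rotate]
    · simp [cycCost, List.rotate]; ring_nf; rw [add_comm]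

lemma my_marg [Fintype V] [DecidableEq V] (p : V → ℝ) {u v : V} (huv : u ≠ v) :
    ∑ A : Finset V, (if u ∈ A ∧ v ∈ A then (∏ w ∈ A, p w) * ∏ w ∈ Aᶜ, (1 - p w) else 0)
      = p u * p v := by
  classical
  rw [← Finset.sum_filter]
  have key : ∑ A ∈ Finset.univ.filter (fun A : Finset V => u ∈ A ∧ v ∈ A),
      (∏ w ∈ A, p w) * ∏ w ∈ Aᶜ, (1 - p w)
      = ∑ B ∈ ({u, v}ᶜ : Finset V).powerset,
          p u * p v * ((∏ w ∈ B, p w) * ∏ w ∈ ({u, v}ᶜ : Finset V) \ B, (1 - p w)) := by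
    refine Finset.sum_nbij' (fun A => A \ {u, v}) (fun B => B ∪ {u, v}) ?_ ?_ ?_ ?_ ?_
    · intro A hA
      simp only [Finset.mem_powerset]
      intro x hx
      simp only [Finset.mem_sdiff, Finset.mem_insert, Finset.mem_singleton] at hx
      simp only [Finset.mem_compl, Finset.mem_insert, Finset.mem_singleton]
      tauto
    · intro B hB
      simp only [Finset.mem_filter, Finset.mem_univ, true_and]
      constructor <;> simp [Finset.mem_union]
    · intro A hA
      simp only [Finset.mem_filter, Finset.mem_univ, true_and] at hA
      apply Finset.sdiff_union_of_subset
      intro x hx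
      simp only [Finset.mem_insert, Finset.mem_singleton] at hx
      rcases hx with rfl | rfl
      · exact hA.1
      · exact hA.2
    · intro B hB
      simp only [Finset.mem_powerset] at hB
      apply Finset.union_sdiff_cancel_right
      rw [Finset.disjoint_left]
      intro x hx
      have := hB hx
      simp only [Finset.mem_compl] at this
      exact this
    · intro A hA
      simp only [Finset.mem_filter, Finset.mem_univ, true_and] at hA
      have hsub : ({u, v} : Finset V) ⊆ A := by
        intro x hx
        simp only [Finset.mem_insert, Finset.mem_singleton] at hx
        rcases hx with rfl | rfl
        · exact hA.1
        · exact hA.2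
      have h1 : (∏ w ∈ A, p w) = (∏ w ∈ A \ {u, v}, p w) * (p u * p v) := by
        rw [← Finset.prod_pair huv, Finset.prod_sdiff hsub]
      have h2 : Aᶜ = ({u, v}ᶜ : Finset V) \ (A \ {u, v}) := by
        ext x
        simp only [Finset.mem_compl, Finset.mem_sdiff, Finset.mem_insert, Finset.mem_singleton,
          not_or]
        have e1 : x = u → x ∈ A := fun h => h ▸ hA.1
        have e2 : x = v → x ∈ A := fun h => h ▸ hA.2
        tauto
      rw [h1, h2]
      ring
  rw [key, ← Finset.mul_sum, ← Finset.prod_add]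
  simp

lemma my_cycCost_le_sum [Fintype V] [DecidableEq V] (c : V → V → ℝ)
    (hc0 : ∀ x y, 0 ≤ c x y) (hcrefl : ∀ v, c v v = 0)
    (A : Finset V) (l : List V) (hnd : l.Nodup) (hmem : ∀ x ∈ l, x ∈ A) :
    cycCost c l ≤ ∑ x ∈ Finset.univ.offDiag, (if x.1 ∈ A ∧ x.2 ∈ A then c x.1 x.2 else 0) := by
  have hRHS : (0:ℝ) ≤ ∑ x ∈ Finset.univ.offDiag, (if x.1 ∈ A ∧ x.2 ∈ A then c x.1 x.2 else 0) := by
    refine Finset.sum_nonneg fun x _ => ?_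
    split
    · exact hc0 _ _
    · exact le_rfl
  by_cases hlen : 2 ≤ l.length
  swap
  · rcases l with - | ⟨a, - | ⟨b, t⟩⟩
    · simpa [cycCost] using hRHS
    · simpa [cycCost, List.rotate, hcrefl] using hRHS
    · simp at hlen
  · have hpos : 0 < l.length := by omega
    have hrep : cycCost c l = ∑ i : Fin l.length,
        c (l.get i) (l.get ⟨(i.1 + 1) % l.length, Nat.mod_lt _ hpos⟩) := by
      rw [cycCost, ← List.sum_ofFn]
      congr 1
      apply List.ext_getElem
      · simp
      · intro i h1 h2
        simp [List.getElem_zipWith, List.getElem_rotate, List.getElem_ofFn,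
          List.get_eq_getElem]
    have hinj : Function.Injective l.get := List.nodup_iff_injective_get.mp hnd
    have hφinj : ∀ x ∈ (Finset.univ : Finset (Fin l.length)), ∀ y ∈ Finset.univ,
        (fun i : Fin l.length =>
          ((l.get i, l.get ⟨(i.1 + 1) % l.length, Nat.mod_lt _ hpos⟩) : V × V)) x =
        (fun i : Fin l.length =>
          ((l.get i, l.get ⟨(i.1 + 1) % l.length, Nat.mod_lt _ hpos⟩) : V × V)) y → x = y := by
      intro i _ j _ h
      exact hinj (congrArg Prod.fst h)
    have himg : ∑ x ∈ Finset.univ.image (fun i : Fin l.length =>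
          ((l.get i, l.get ⟨(i.1 + 1) % l.length, Nat.mod_lt _ hpos⟩) : V × V)),
        c x.1 x.2
        = ∑ i : Fin l.length, c (l.get i) (l.get ⟨(i.1 + 1) % l.length, Nat.mod_lt _ hpos⟩) :=
      Finset.sum_image hφinj
    have hsub : Finset.univ.image (fun i : Fin l.length =>
          ((l.get i, l.get ⟨(i.1 + 1) % l.length, Nat.mod_lt _ hpos⟩) : V × V))
        ⊆ Finset.univ.offDiag := by
      intro x hx
      obtain ⟨i, -, rfl⟩ := Finset.mem_image.mp hx
      rw [Finset.mem_offDiag]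
      refine ⟨Finset.mem_univ _, Finset.mem_univ _, ?_⟩
      have hne : i ≠ (⟨(i.1 + 1) % l.length, Nat.mod_lt _ hpos⟩ : Fin l.length) := by
        intro h
        have hval : i.1 = (i.1 + 1) % l.length := congrArg Fin.val h
        have hi2 := i.2
        rcases Nat.lt_or_ge (i.1 + 1) l.length with h' | h'
        · rw [Nat.mod_eq_of_lt h'] at hval; omega
        · have he : i.1 + 1 = l.length := by omega
          rw [he, Nat.mod_self] at hval
          omega
      exact fun h => hne (hinj h)
    rw [hrep, ← himg]
    calc ∑ x ∈ Finset.univ.image (fun i : Fin l.length =>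
          ((l.get i, l.get ⟨(i.1 + 1) % l.length, Nat.mod_lt _ hpos⟩) : V × V)), c x.1 x.2
        = ∑ x ∈ Finset.univ.image (fun i : Fin l.length =>
          ((l.get i, l.get ⟨(i.1 + 1) % l.length, Nat.mod_lt _ hpos⟩) : V × V)),
            (if x.1 ∈ A ∧ x.2 ∈ A then c x.1 x.2 else 0) := by
          refine Finset.sum_congr rfl fun x hx => ?_
          obtain ⟨i, -, rfl⟩ := Finset.mem_image.mp hx
          rw [if_pos ⟨hmem _ (l.get_mem _), hmem _ (l.get_mem _)⟩]
      _ ≤ _ := by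
          refine Finset.sum_le_sum_of_subset_of_nonneg hsub fun x _ _ => ?_
          split
          · exact hc0 _ _
          · exact le_rfl

end MyAux

/-- if the total activation probability is at most `1/2`, every a priori tour
has expected short-cut cost at most twice the expected cost of an optimal a posteriori tour. -/
theorem statement9 {V : Type*} [Fintype V] [DecidableEq V]
    (c : V → V → ℝ) (p : V → ℝ)
    (hc0 : ∀ x y, 0 ≤ c x y)
    (hcrefl : ∀ v, c v v = 0)
    (htri : ∀ x y z, c x z ≤ c x y + c y z)
    (hp0 : ∀ v, 0 ≤ p v) (hp1 : ∀ v, p v ≤ 1)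
    (hpV : (∑ v, p v) ≤ 1 / 2)
    (T : List V) (hT : IsTour Finset.univ T) :
    apExpect p (fun A => cycCost c (shortcut T A)) ≤
      2 * apExpect p (fun A => TSP c A) := by
  classical
  have hw0 : ∀ A : Finset V, 0 ≤ (∏ v ∈ A, p v) * ∏ v ∈ Aᶜ, (1 - p v) := fun A =>
    mul_nonneg (Finset.prod_nonneg fun v _ => hp0 v)
      (Finset.prod_nonneg fun v _ => by linarith [hp1 v])
  have step1 : apExpect p (fun A => cycCost c (shortcut T A)) ≤
      ∑ x ∈ Finset.univ.offDiag, p x.1 * p x.2 * c x.1 x.2 := by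
    have h1 : apExpect p (fun A => cycCost c (shortcut T A)) ≤
        ∑ A : Finset V, (∏ v ∈ A, p v) * (∏ v ∈ Aᶜ, (1 - p v)) *
          (∑ x ∈ Finset.univ.offDiag, (if x.1 ∈ A ∧ x.2 ∈ A then c x.1 x.2 else 0)) := by
      refine Finset.sum_le_sum fun A _ => ?_
      refine mul_le_mul_of_nonneg_left ?_ (hw0 A)
      refine my_cycCost_le_sum c hc0 hcrefl A _ (hT.1.filter _) ?_
      intro x hx
      have := List.mem_filter.mp hx
      simpa using this.2
    refine h1.trans_eq ?_
    have h2 : ∑ A : Finset V, (∏ v ∈ A, p v) * (∏ v ∈ Aᶜ, (1 - p v)) *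
          (∑ x ∈ Finset.univ.offDiag, (if x.1 ∈ A ∧ x.2 ∈ A then c x.1 x.2 else 0))
        = ∑ x ∈ Finset.univ.offDiag, (∑ A : Finset V,
            (if x.1 ∈ A ∧ x.2 ∈ A then (∏ v ∈ A, p v) * (∏ v ∈ Aᶜ, (1 - p v)) else 0))
              * c x.1 x.2 := by
      simp_rw [Finset.mul_sum, mul_ite, mul_zero]
      rw [Finset.sum_comm]
      simp_rw [Finset.sum_mul, ite_mul, zero_mul]
    rw [h2]
    refine Finset.sum_congr rfl fun x hx => ?_
    rw [my_marg p (Finset.mem_offDiag.mp hx).2.2]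
  have step2 : ∑ x ∈ Finset.univ.offDiag, p x.1 * p x.2 * c x.1 x.2
      ≤ 2 * apExpect p (fun A => TSP c A) := by
    have hmaps : ∀ x ∈ (Finset.univ.offDiag : Finset (V × V)),
        ({x.1, x.2} : Finset V) ∈ Finset.univ.offDiag.image
          (fun x : V × V => ({x.1, x.2} : Finset V)) :=
      fun x hx => Finset.mem_image_of_mem _ hx
    rw [← Finset.sum_fiberwise_of_maps_to hmaps]
    have hper : ∀ A ∈ Finset.univ.offDiag.image (fun x : V × V => ({x.1, x.2} : Finset V)),
        (∑ x ∈ Finset.univ.offDiag.filter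
            (fun x : V × V => ({x.1, x.2} : Finset V) = A), p x.1 * p x.2 * c x.1 x.2)
          ≤ 2 * ((∏ v ∈ A, p v) * (∏ v ∈ Aᶜ, (1 - p v)) * TSP c A) := by
      intro A hA
      obtain ⟨x₀, hx₀, rfl⟩ := Finset.mem_image.mp hA
      obtain ⟨-, -, huv⟩ := Finset.mem_offDiag.mp hx₀
      obtain ⟨u, v⟩ := x₀
      simp only at huv
      have hfib : Finset.univ.offDiag.filter
          (fun x : V × V => ({x.1, x.2} : Finset V) = {u, v}) = {(u, v), (v, u)} := by
        ext ⟨a, b⟩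
        simp only [Finset.mem_filter, Finset.mem_offDiag, Finset.mem_univ, true_and,
          Finset.mem_insert, Finset.mem_singleton, Prod.mk.injEq]
        constructor
        · rintro ⟨hab, hset⟩
          have ha : a = u ∨ a = v := by
            have : a ∈ ({u, v} : Finset V) := hset ▸ (by simp)
            simpa using this
          have hb : b = u ∨ b = v := by
            have : b ∈ ({u, v} : Finset V) := hset ▸ (by simp)
            simpa using this
          have hu' : u ∈ ({a, b} : Finset V) := by rw [hset]; simp
          have hv' : v ∈ ({a, b} : Finset V) := by rw [hset]; simp
          simp only [Finset.mem_insert, Finset.mem_singleton] at hu' hv'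
          tauto
        · rintro (⟨rfl, rfl⟩ | ⟨rfl, rfl⟩)
          · exact ⟨huv, rfl⟩
          · exact ⟨huv.symm, by rw [Finset.pair_comm]⟩
      rw [hfib, Finset.sum_pair (fun h => huv (Prod.ext_iff.mp h).1)]
      have hT2 : c u v + c v u ≤ TSP c {u, v} := my_TSP_pair c huv
      have hTSP0 : 0 ≤ TSP c {u, v} := my_TSP_nonneg c hc0 _
      have hpp : 0 ≤ p u * p v := mul_nonneg (hp0 u) (hp0 v)
      have hprod : ∏ w ∈ ({u, v} : Finset V), p w = p u * p v := Finset.prod_pair huv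
      have hcompl : (1:ℝ) / 2 ≤ ∏ w ∈ ({u, v}ᶜ : Finset V), (1 - p w) := by
        have h1 := my_one_sub_sum_le_prod p hp0 hp1 ({u, v}ᶜ : Finset V)
        have h2 : ∑ w ∈ ({u, v}ᶜ : Finset V), p w ≤ ∑ w, p w :=
          Finset.sum_le_sum_of_subset_of_nonneg (Finset.subset_univ _) fun i _ _ => hp0 i
        linarith
      rw [hprod]
      have key1 : p u * p v * (c u v + c v u) ≤ p u * p v * TSP c {u, v} :=
        mul_le_mul_of_nonneg_left hT2 hpp
      have key2 : p u * p v * (1/2) * TSP c {u, v} ≤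
          p u * p v * (∏ w ∈ ({u, v}ᶜ : Finset V), (1 - p w)) * TSP c {u, v} :=
        mul_le_mul_of_nonneg_right (mul_le_mul_of_nonneg_left hcompl hpp) hTSP0
      nlinarith [key1, key2]
    calc ∑ A ∈ Finset.univ.offDiag.image (fun x : V × V => ({x.1, x.2} : Finset V)),
          ∑ x ∈ Finset.univ.offDiag.filter
            (fun x : V × V => ({x.1, x.2} : Finset V) = A), p x.1 * p x.2 * c x.1 x.2
        ≤ ∑ A ∈ Finset.univ.offDiag.image (fun x : V × V => ({x.1, x.2} : Finset V)),
            2 * ((∏ v ∈ A, p v) * (∏ v ∈ Aᶜ, (1 - p v)) * TSP c A) :=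
          Finset.sum_le_sum hper
      _ = 2 * ∑ A ∈ Finset.univ.offDiag.image (fun x : V × V => ({x.1, x.2} : Finset V)),
            (∏ v ∈ A, p v) * (∏ v ∈ Aᶜ, (1 - p v)) * TSP c A := by
          rw [Finset.mul_sum]
      _ ≤ 2 * ∑ A : Finset V, (∏ v ∈ A, p v) * (∏ v ∈ Aᶜ, (1 - p v)) * TSP c A := by
          have := Finset.sum_le_sum_of_subset_of_nonneg
            (Finset.subset_univ
              (Finset.univ.offDiag.image (fun x : V × V => ({x.1, x.2} : Finset V))))
            (fun A _ _ => mul_nonneg (hw0 A) (my_TSP_nonneg c hc0 A))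
          linarith
      _ = 2 * apExpect p (fun A => TSP c A) := rfl
  exact step1.trans step2

end
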